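/- Let f ∈ L²(ℝ₊, r^{n−1}dr) be such that the function g(r) := conj(f(r))·ψ(r)·r^{n−1}, extended by 0 to all of ℝ, is both integrable and square-integrable. Then ∫_ℝ |⟨f, ψ_x⟩|² dx = ∫₀^∞ 𝔰(r)·|f(r)|²·r^{n−1} dr, where ⟨f, ψ_x⟩ = ∫₀^∞ conj(f(r))·e^{−ixr}·ψ(r)·r^{n−1} dr. That is, the frame operator of the family {ψ_x}_{x∈ℝ} of affine coherent states acts as multiplication by the function 𝔰. -/

import Mathlib

open MeasureTheory

open MeasureTheory Complex Real Filter Module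
open scoped Topology ENNReal
noncomputable section

def shearEquiv : (ℝ × ℝ) ≃ᵐ (ℝ × ℝ) where
  toFun z := (z.1 - z.2, z.2)
  invFun w := (w.1 + w.2, w.2)
  left_inv z := by simp
  right_inv w := by simp
  measurable_toFun := (measurable_fst.sub measurable_snd).prodMk measurable_snd
  measurable_invFun := (measurable_fst.add measurable_snd).prodMk measurable_snd

lemma gauss_step {g : ℝ → ℂ} (hgm : Measurable g) (hg1 : Integrable g volume)
    (c : ℝ) (hc : 0 < c) :
    ((∫ x : ℝ, rexp (-(4*π^2*c)⁻¹ * x^2) * ‖∫ t : ℝ, g t * cexp (-(I * x * t))‖^2 : ℝ) : ℂ)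
    = (2*π : ℂ) *
      ∫ u : ℝ, ((π * c : ℂ) ^ (finrank ℝ ℝ / 2 : ℂ) * cexp (-π ^ 2 * c * ‖(0:ℝ) - u‖ ^ 2)) •
        (∫ s : ℝ, (starRingEnd ℂ) (g s) * g (s - u)) := by
  have hπ : (0:ℝ) < π := Real.pi_pos
  set b : ℝ := (4*π^2*c)⁻¹ with hbdef
  have hb : 0 < b := by positivity
  have hb' : (0:ℝ) < ((b:ℂ)).re := by simpa using hb
  set F : ℝ → ℂ := fun x => ∫ t : ℝ, g t * cexp (-(I * x * t)) with hF
  set W : ℝ → ℝ × ℝ → ℂ := fun x p =>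
    cexp (-(b:ℂ) * x^2) * (((starRingEnd ℂ) (g p.1) * cexp (I*x*p.1)) * (g p.2 * cexp (-(I*x*p.2)))) with hW
  -- step 1
  have step1 : ∀ x : ℝ, ((rexp (-b * x^2) * ‖F x‖^2 : ℝ) : ℂ)
      = ∫ p : ℝ × ℝ, W x p ∂((volume : Measure ℝ).prod volume) := by
    intro x
    have hconj : (starRingEnd ℂ) (F x) = ∫ s : ℝ, (starRingEnd ℂ) (g s) * cexp (I*x*s) := by
      rw [hF, ← integral_conj]
      refine integral_congr_ae (.of_forall fun s => ?_)
      show (starRingEnd ℂ) (g s * cexp (-(I * ↑x * ↑s))) = _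
      rw [map_mul, ← Complex.exp_conj]
      simp
    have : (∫ p : ℝ × ℝ, W x p ∂((volume : Measure ℝ).prod volume))
        = cexp (-(b:ℂ) * x^2) * ((starRingEnd ℂ) (F x) * F x) := by
      rw [hW]
      simp only
      rw [integral_const_mul,
        integral_prod_mul (fun s : ℝ => (starRingEnd ℂ) (g s) * cexp (I*x*s))
          (fun t : ℝ => g t * cexp (-(I*x*t))), hconj, hF]
    rw [this, mul_comm ((starRingEnd ℂ) (F x)) (F x), Complex.mul_conj']
    push_cast [Complex.ofReal_exp]
    ring
  -- integrability of W on the product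
  have hWm : AEStronglyMeasurable (fun z : ℝ × (ℝ × ℝ) => W z.1 z.2)
      ((volume : Measure ℝ).prod ((volume : Measure ℝ).prod volume)) := by
    apply Measurable.aestronglyMeasurable
    rw [hW]
    have mr1 : Measurable fun z : ℝ × (ℝ × ℝ) => ((z.1 : ℝ) : ℂ) :=
      Complex.measurable_ofReal.comp measurable_fst
    have mr2 : Measurable fun z : ℝ × (ℝ × ℝ) => ((z.2.1 : ℝ) : ℂ) :=
      Complex.measurable_ofReal.comp (measurable_fst.comp measurable_snd)
    have mr3 : Measurable fun z : ℝ × (ℝ × ℝ) => ((z.2.2 : ℝ) : ℂ) :=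
      Complex.measurable_ofReal.comp (measurable_snd.comp measurable_snd)
    have mg1 : Measurable fun z : ℝ × (ℝ × ℝ) => g z.2.1 :=
      hgm.comp (measurable_fst.comp measurable_snd)
    have mg2 : Measurable fun z : ℝ × (ℝ × ℝ) => g z.2.2 :=
      hgm.comp (measurable_snd.comp measurable_snd)
    exact (Complex.measurable_exp.comp (measurable_const.mul (mr1.pow measurable_const))).mul
      (((Complex.continuous_conj.measurable.comp mg1).mul
          (Complex.measurable_exp.comp ((measurable_const.mul mr1).mul mr2))).mul
        (mg2.mul (Complex.measurable_exp.comp (((measurable_const.mul mr1).mul mr3).neg))))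
  have hWi : Integrable (fun z : ℝ × (ℝ × ℝ) => W z.1 z.2)
      ((volume : Measure ℝ).prod ((volume : Measure ℝ).prod volume)) := by
    have hbound : Integrable
        (fun z : ℝ × (ℝ × ℝ) => rexp (-b * z.1^2) * (‖g z.2.1‖ * ‖g z.2.2‖))
        ((volume : Measure ℝ).prod ((volume : Measure ℝ).prod volume)) :=
      (integrable_exp_neg_mul_sq hb).mul_prod (hg1.norm.mul_prod hg1.norm)
    refine hbound.mono' hWm (.of_forall fun z => ?_)
    rw [hW]
    simp only [norm_mul, Complex.norm_exp, map_mul, Complex.norm_conj]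
    have h1 : (-(b:ℂ) * (z.1:ℂ)^2).re = -b * z.1^2 := by
      rw [show (-(b:ℂ) * (z.1:ℂ)^2) = ((-b * z.1^2 : ℝ) : ℂ) by push_cast; ring,
        Complex.ofReal_re]
    have h2 : ∀ y w : ℝ, (I * (y:ℂ) * (w:ℂ)).re = 0 := by intro y w; simp
    have h3 : ∀ y w : ℝ, (-(I * (y:ℂ) * (w:ℂ))).re = 0 := by intro y w; simp
    rw [h1, h2, h3]
    apply le_of_eq
    simp [Real.exp_zero]
  set K : ℂ := 2*π*((π : ℂ) * c) ^ ((1:ℂ)/2) with hK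
  have hπcC : ((π:ℂ)^2 * c) ≠ 0 := by
    apply mul_ne_zero (pow_ne_zero _ _)
    · exact_mod_cast ne_of_gt hc
    · exact_mod_cast ne_of_gt hπ
  have hexp : ∀ X : ℂ, -X^2 / (4*(b:ℂ)) = -(π:ℂ)^2*c*X^2 := by
    intro X
    rw [hbdef]
    push_cast
    rw [show ((4:ℂ)*(π:ℂ)^2*(c:ℂ))⁻¹ = (4:ℂ)⁻¹ * ((π:ℂ)^2*(c:ℂ))⁻¹ by
      rw [← mul_inv]; ring_nf]
    field_simp
  have hM : ((π:ℂ)/(b:ℂ)) ^ ((1:ℂ)/2) = K := by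
    have h1 : ((π:ℂ)/(b:ℂ)) = (((π/b : ℝ)):ℂ) := by push_cast; ring
    have h2 : (π/b : ℝ) = (2*π)^2 * (π*c) := by
      rw [hbdef]; field_simp; ring
    have h3 : ((2*π)^2 * (π*c) : ℝ) ^ ((1:ℝ)/2) = 2*π*(π*c) ^ ((1:ℝ)/2) := by
      rw [Real.mul_rpow (by positivity) (by positivity)]
      congr 1
      rw [← Real.rpow_natCast (2*π) 2, ← Real.rpow_mul (by positivity)]
      norm_num
    rw [h1, h2, show ((1:ℂ)/2) = (((1:ℝ)/2 : ℝ) : ℂ) by norm_num,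
      ← Complex.ofReal_cpow (by positivity) (1/2), h3, hK,
      show ((π : ℂ) * c) = (((π * c : ℝ)):ℂ) by push_cast; ring,
      show ((1:ℂ)/2) = (((1:ℝ)/2 : ℝ) : ℂ) by norm_num,
      ← Complex.ofReal_cpow (by positivity) (1/2)]
    push_cast
    ring
  have step2 : ∀ p : ℝ × ℝ, (∫ x : ℝ, W x p)
      = (starRingEnd ℂ) (g p.1) * g p.2 * (K * cexp (-(π:ℂ)^2*c*((p.1:ℂ) - p.2)^2)) := by
    intro p
    have e1 : ∀ x : ℝ, W x p
        = ((starRingEnd ℂ) (g p.1) * g p.2) *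
          (cexp (I * ((p.1:ℂ) - p.2) * x) * cexp (-(b:ℂ) * x^2)) := by
      intro x
      calc W x p = ((starRingEnd ℂ) (g p.1) * g p.2) *
            (cexp (I*(x:ℂ)*p.1) * cexp (-(I*(x:ℂ)*p.2)) * cexp (-(b:ℂ)*(x:ℂ)^2)) := by
              rw [hW]; ring
        _ = ((starRingEnd ℂ) (g p.1) * g p.2) *
            cexp (I*(x:ℂ)*p.1 + -(I*(x:ℂ)*p.2) + -(b:ℂ)*(x:ℂ)^2) := by
              rw [Complex.exp_add, Complex.exp_add]
        _ = ((starRingEnd ℂ) (g p.1) * g p.2) *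
            cexp (I * ((p.1:ℂ) - p.2) * x + -(b:ℂ)*(x:ℂ)^2) := by
              rw [show I*(x:ℂ)*(p.1:ℂ) + -(I*(x:ℂ)*p.2) + -(b:ℂ)*(x:ℂ)^2
                = I * ((p.1:ℂ) - p.2) * x + -(b:ℂ)*(x:ℂ)^2 from by ring]
        _ = _ := by rw [Complex.exp_add]
    calc (∫ x : ℝ, W x p)
        = ∫ x : ℝ, ((starRingEnd ℂ) (g p.1) * g p.2) *
            (cexp (I * ((p.1:ℂ) - p.2) * x) * cexp (-(b:ℂ) * x^2)) :=
          integral_congr_ae (.of_forall e1)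
      _ = ((starRingEnd ℂ) (g p.1) * g p.2) *
            ∫ x : ℝ, cexp (I * ((p.1:ℂ) - p.2) * x) * cexp (-(b:ℂ) * x^2) :=
          integral_const_mul _ _
      _ = _ := by
          rw [fourierIntegral_gaussian hb' ((p.1:ℂ) - (p.2:ℂ)), hexp, hM]
  -- abbreviations for the two sides of the shear
  set A : ℝ × ℝ → ℂ := fun p =>
    (starRingEnd ℂ) (g p.1) * g p.2 * (K * cexp (-(π:ℂ)^2*c*((p.1:ℂ) - p.2)^2)) with hA
  set B : ℝ × ℝ → ℂ := fun w =>
    (starRingEnd ℂ) (g (w.1 + w.2)) * g w.2 * (K * cexp (-(π:ℂ)^2*c*(w.1:ℂ)^2)) with hB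
  have hAB : (fun z : ℝ × ℝ => B (z.1 - z.2, z.2)) = A := by
    funext z
    rw [hA, hB]
    simp only [sub_add_cancel]
    push_cast
    ring_nf
  have hemb : MeasurableEmbedding (fun z : ℝ × ℝ => (z.1 - z.2, z.2)) :=
    shearEquiv.measurableEmbedding
  have hmp : MeasurePreserving (fun z : ℝ × ℝ => (z.1 - z.2, z.2))
      ((volume : Measure ℝ).prod volume) ((volume : Measure ℝ).prod volume) :=
    measurePreserving_sub_prod volume volume
  have hAi : Integrable A ((volume : Measure ℝ).prod volume) := by
    have hbound : Integrable (fun p : ℝ × ℝ => ‖K‖ * (‖g p.1‖ * ‖g p.2‖))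
        ((volume : Measure ℝ).prod volume) := (hg1.norm.mul_prod hg1.norm).const_mul _
    have hAm : AEStronglyMeasurable A ((volume : Measure ℝ).prod volume) := by
      apply Measurable.aestronglyMeasurable
      rw [hA]
      have mg1 : Measurable fun p : ℝ × ℝ => g p.1 := hgm.comp measurable_fst
      have mg2 : Measurable fun p : ℝ × ℝ => g p.2 := hgm.comp measurable_snd
      exact ((Complex.continuous_conj.measurable.comp mg1).mul mg2).mul
        (measurable_const.mul (Complex.measurable_exp.comp
          ((measurable_const.mul (((Complex.measurable_ofReal.comp measurable_fst).sub
            (Complex.measurable_ofReal.comp measurable_snd)).pow measurable_const)))))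
    refine hbound.mono' hAm (.of_forall fun p => ?_)
    rw [hA]
    simp only [norm_mul, Complex.norm_conj]
    rw [show (-(π:ℂ)^2*c*((p.1:ℂ) - p.2)^2) = ((-(π^2*c*(p.1 - p.2)^2) : ℝ) : ℂ) by
      push_cast; ring]
    rw [Complex.norm_exp, Complex.ofReal_re]
    have h5 : rexp (-(π^2*c*(p.1 - p.2)^2)) ≤ 1 := by
      rw [Real.exp_le_one_iff]
      exact neg_nonpos.mpr (by positivity)
    calc ‖g p.1‖ * ‖g p.2‖ *
          (‖K‖ * rexp (-(π^2*c*(p.1 - p.2)^2)))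
        ≤ ‖g p.1‖ * ‖g p.2‖ * (‖K‖ * 1) := by
          gcongr
      _ = ‖K‖ * (‖g p.1‖ * ‖g p.2‖) := by
          ring
  have hBi : Integrable B ((volume : Measure ℝ).prod volume) := by
    refine (hmp.integrable_comp_emb hemb).mp ?_
    have h := hAi
    rw [← hAB] at h
    exact h
  have hΦeq : ∀ u : ℝ, (∫ t : ℝ, (starRingEnd ℂ) (g (u + t)) * g t)
      = ∫ s : ℝ, (starRingEnd ℂ) (g s) * g (s - u) := by
    intro u
    rw [← integral_add_right_eq_self (fun s : ℝ => (starRingEnd ℂ) (g s) * g (s - u)) u]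
    refine integral_congr_ae (.of_forall fun t => ?_)
    simp only [add_sub_cancel_right]
    rw [add_comm]
  -- put everything together
  calc ((∫ x : ℝ, rexp (-(4*π^2*c)⁻¹ * x^2) * ‖F x‖^2 : ℝ) : ℂ)
      = ∫ x : ℝ, ((rexp (-(4*π^2*c)⁻¹ * x^2) * ‖F x‖^2 : ℝ) : ℂ) :=
        (integral_ofReal).symm
    _ = ∫ x : ℝ, ∫ p : ℝ × ℝ, W x p ∂((volume : Measure ℝ).prod volume) :=
        integral_congr_ae (.of_forall step1)
    _ = ∫ p : ℝ × ℝ, (∫ x : ℝ, W x p) ∂((volume : Measure ℝ).prod volume) :=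
        integral_integral_swap hWi
    _ = ∫ p : ℝ × ℝ, A p ∂((volume : Measure ℝ).prod volume) :=
        integral_congr_ae (.of_forall step2)
    _ = ∫ w : ℝ × ℝ, B w ∂((volume : Measure ℝ).prod volume) := by
        rw [← hmp.integral_comp hemb B, hAB]
    _ = ∫ u : ℝ, ∫ t : ℝ, B (u, t) := integral_prod _ hBi
    _ = ∫ u : ℝ, (K * cexp (-(π:ℂ)^2*c*(u:ℂ)^2)) *
          ∫ s : ℝ, (starRingEnd ℂ) (g s) * g (s - u) := by
        refine integral_congr_ae (.of_forall fun u => ?_)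
        beta_reduce
        rw [← hΦeq u, ← integral_const_mul]
        refine integral_congr_ae (.of_forall fun t => ?_)
        rw [hB]
        ring
    _ = (2*π : ℂ) *
        ∫ u : ℝ, ((π * c : ℂ) ^ (finrank ℝ ℝ / 2 : ℂ) * cexp (-π ^ 2 * c * ‖(0:ℝ) - u‖ ^ 2)) •
          (∫ s : ℝ, (starRingEnd ℂ) (g s) * g (s - u)) := by
        rw [← integral_const_mul]
        refine integral_congr_ae (.of_forall fun u => ?_)
        beta_reduce
        rw [smul_eq_mul, hK]
        rw [show ((finrank ℝ ℝ : ℂ) / 2) = (1:ℂ)/2 by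
          rw [Module.finrank_self]; norm_num]
        rw [show ((‖(0:ℝ) - u‖ : ℝ) : ℂ)^2 = (u:ℂ)^2 by
          rw [zero_sub, norm_neg, Real.norm_eq_abs, ← Complex.ofReal_pow, _root_.sq_abs u,
            Complex.ofReal_pow]]
        push_cast
        ring

local instance factOneLeTwo : Fact ((1:ℝ≥0∞) ≤ 2) := ⟨one_le_two⟩

def trL (u : ℝ) : C(ℝ, ℝ) := ⟨fun s => s - u, by continuity⟩

lemma trL_mp (u : ℝ) : MeasurePreserving (trL u) (volume : Measure ℝ) volume := by
  simpa [trL, sub_eq_add_neg] using measurePreserving_add_right (volume : Measure ℝ) (-u)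

lemma plancherel_L1_L2 {g : ℝ → ℂ} (hgm : Measurable g) (hg1 : Integrable g volume)
    (hg2 : MemLp g 2 volume) :
    ∫ x : ℝ, ‖∫ t : ℝ, g t * cexp (-(I * x * t))‖^2 = 2 * π * ∫ t : ℝ, ‖g t‖^2 := by
  have hπ := Real.pi_pos
  set F : ℝ → ℂ := fun x => ∫ t : ℝ, g t * cexp (-(I * x * t)) with hF
  set Φ : ℝ → ℂ := fun u => ∫ s : ℝ, (starRingEnd ℂ) (g s) * g (s - u) with hΦ
  -- continuity of Φ
  have hΦc : Continuous Φ := by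
    set G2 : Lp ℂ 2 (volume : Measure ℝ) := hg2.toLp g with hG2
    have hGg : (G2 : ℝ → ℂ) =ᵐ[volume] g := hg2.coeFn_toLp
    have hT : Continuous fun u : ℝ =>
        Lp.compMeasurePreserving (trL u) (trL_mp u) G2 := by
      apply Continuous.compMeasurePreservingLp continuous_const _ _ (by norm_num)
      apply ContinuousMap.continuous_of_continuous_uncurry
      exact continuous_snd.sub continuous_fst
    have key : ∀ u : ℝ, Φ u
        = (inner ℂ G2 (Lp.compMeasurePreserving (trL u) (trL_mp u) G2) : ℂ) := by
      intro u
      rw [L2.inner_def]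
      have h1 : (Lp.compMeasurePreserving (trL u) (trL_mp u) G2 : ℝ → ℂ)
          =ᵐ[volume] fun s => g (s - u) := by
        refine (Lp.coeFn_compMeasurePreserving _ _).trans ?_
        exact (trL_mp u).quasiMeasurePreserving.ae_eq_comp hGg
      refine integral_congr_ae ?_
      filter_upwards [hGg, h1] with s h2 h3
      rw [show (inner ℂ (G2 s) ((Lp.compMeasurePreserving (trL u) (trL_mp u) G2 : ℝ → ℂ) s) : ℂ)
        = (starRingEnd ℂ) (G2 s)
          * ((Lp.compMeasurePreserving (trL u) (trL_mp u) G2 : ℝ → ℂ) s) from RCLike.inner_apply' _ _, h2, h3]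
    rw [funext key]
    exact Continuous.inner continuous_const hT
  -- integrability of Φ
  have hΦi : Integrable Φ volume := by
    have h1 : Integrable (fun s : ℝ => (starRingEnd ℂ) (g s)) volume := by
      refine ⟨(Complex.continuous_conj.comp_aestronglyMeasurable hg1.1 : _), ?_⟩
      simpa [HasFiniteIntegral] using hg1.2
    have h2 : Integrable (fun s : ℝ => g (-s)) volume := hg1.comp_neg
    have h3 := h1.integrable_convolution (ContinuousLinearMap.mul ℂ ℂ) h2
    apply h3.congr
    filter_upwards with u
    unfold MeasureTheory.convolution
    simp [neg_sub]
    rfl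
  set G : ℝ := ∫ t : ℝ, ‖g t‖^2 with hGdef
  have hGnn : 0 ≤ G := integral_nonneg fun t => by positivity
  have hΦ0 : Φ 0 = (G : ℂ) := by
    calc Φ 0 = ∫ s : ℝ, (starRingEnd ℂ) (g s) * g (s - 0) := rfl
      _ = ∫ s : ℝ, ((‖g s‖^2 : ℝ) : ℂ) :=
          integral_congr_ae (.of_forall fun s => by
            beta_reduce
            rw [sub_zero, mul_comm, Complex.mul_conj']; push_cast; ring)
      _ = ((∫ s : ℝ, ‖g s‖^2 : ℝ) : ℂ) := integral_ofReal (f := fun s : ℝ => ‖g s‖^2)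
      _ = (G : ℂ) := rfl
  have peak : Tendsto (fun c : ℝ => (2*π:ℂ) *
      ∫ u : ℝ, ((π * c : ℂ) ^ (finrank ℝ ℝ / 2 : ℂ) * cexp (-π ^ 2 * c * ‖(0:ℝ) - u‖ ^ 2)) • Φ u)
      atTop (𝓝 ((2*π:ℂ) * Φ 0)) :=
    (Real.tendsto_integral_gaussian_smul' hΦi hΦc.continuousAt).const_mul _
  have hJtend : Tendsto (fun c : ℝ => (∫ x : ℝ, rexp (-(4*π^2*c)⁻¹ * x^2) * ‖F x‖^2 : ℝ))
      atTop (𝓝 (2*π*G)) := by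
    have h1 : Tendsto (fun c : ℝ =>
        ((∫ x : ℝ, rexp (-(4*π^2*c)⁻¹ * x^2) * ‖F x‖^2 : ℝ) : ℂ)) atTop (𝓝 ((2*π:ℂ) * Φ 0)) := by
      apply peak.congr'
      filter_upwards [Ioi_mem_atTop 0] with c hc
      exact (gauss_step hgm hg1 c hc).symm
    have h2 : (2*π:ℂ) * Φ 0 = ((2*π*G : ℝ) : ℂ) := by rw [hΦ0]; push_cast; ring
    rw [h2] at h1
    have h3 := (Complex.continuous_re.tendsto _).comp h1
    simpa [Function.comp_def] using h3
  -- continuity of F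
  have hFc : Continuous F := by
    rw [hF]
    refine continuous_of_dominated (fun x => ?_) (fun x => ?_) hg1.norm ?_
    · exact (hgm.mul (Complex.measurable_exp.comp
        ((Complex.measurable_ofReal.const_mul (I*(x:ℂ))).neg))).aestronglyMeasurable
    · filter_upwards with t
      rw [norm_mul, show ‖cexp (-(I * (x:ℂ) * t))‖ = 1 by
        rw [Complex.norm_exp]; simp]
      simp
    · filter_upwards with t
      exact continuous_const.mul (Complex.continuous_exp.comp
        (((continuous_const.mul Complex.continuous_ofReal).mul continuous_const).neg))
  -- monotone convergence
  set bk : ℕ → ℝ := fun k => (4*π^2*((k:ℝ)+1))⁻¹ with hbk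
  have hbkpos : ∀ k, 0 < bk k := fun k => by rw [hbk]; positivity
  have hFsq_cont : Continuous fun x : ℝ => ‖F x‖^2 := (hFc.norm.pow 2)
  have hJk_int : ∀ k : ℕ, Integrable (fun x : ℝ => rexp (-(bk k) * x^2) * ‖F x‖^2) volume := by
    intro k
    set C : ℝ := (∫ t : ℝ, ‖g t‖)^2 with hC
    have hFb : ∀ x : ℝ, ‖F x‖ ≤ ∫ t : ℝ, ‖g t‖ := by
      intro x
      rw [hF]
      refine (norm_integral_le_integral_norm _).trans (le_of_eq ?_)
      refine integral_congr_ae (.of_forall fun t => ?_)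
      beta_reduce
      rw [norm_mul, show ‖cexp (-(I * (x:ℂ) * t))‖ = 1 by
        rw [Complex.norm_exp]; simp, mul_one]
    refine ((integrable_exp_neg_mul_sq (hbkpos k)).const_mul C).mono'
      (((Real.continuous_exp.comp
        ((continuous_const.mul (continuous_pow 2)))).mul hFsq_cont).aestronglyMeasurable) ?_
    filter_upwards with x
    rw [Real.norm_of_nonneg (by positivity)]
    have h1 : ‖F x‖^2 ≤ C := by
      rw [hC]
      have := hFb x
      have h0 : (0:ℝ) ≤ ‖F x‖ := norm_nonneg _
      nlinarith
    calc rexp (-(bk k) * x^2) * ‖F x‖^2 ≤ rexp (-(bk k) * x^2) * C := by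
          gcongr
      _ = C * rexp (-(bk k) * x^2) := by ring
  set Jk : ℕ → ℝ → ℝ≥0∞ := fun k x => ENNReal.ofReal (rexp (-(bk k) * x^2) * ‖F x‖^2) with hJk
  have hmeas : ∀ k, AEMeasurable (Jk k) volume := by
    intro k
    exact ((Real.continuous_exp.comp
      (continuous_const.mul (continuous_pow 2))).mul hFsq_cont).measurable.ennreal_ofReal.aemeasurable
  have hmono : ∀ᵐ x ∂(volume : Measure ℝ), Monotone fun k => Jk k x := by
    filter_upwards with x
    intro k l hkl
    rw [hJk]
    refine ENNReal.ofReal_le_ofReal ?_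
    have hex : rexp (-(bk k) * x^2) ≤ rexp (-(bk l) * x^2) := by
      apply Real.exp_le_exp.mpr
      have : bk l ≤ bk k := by
        rw [hbk]
        apply inv_anti₀ (by positivity)
        have : (k:ℝ) ≤ (l:ℝ) := by exact_mod_cast hkl
        nlinarith [Real.pi_pos]
      nlinarith [sq_nonneg x]
    gcongr
  have htd : ∀ᵐ x ∂(volume : Measure ℝ),
      Tendsto (fun k => Jk k x) atTop (𝓝 (ENNReal.ofReal (‖F x‖^2))) := by
    filter_upwards with x
    have h1 : Tendsto (fun k : ℕ => bk k) atTop (𝓝 0) := by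
      rw [hbk]
      apply tendsto_inv_atTop_zero.comp
      apply Tendsto.const_mul_atTop (by positivity)
      exact tendsto_atTop_add_const_right _ 1 tendsto_natCast_atTop_atTop
    have h2 : Tendsto (fun k : ℕ => rexp (-(bk k) * x^2) * ‖F x‖^2) atTop (𝓝 (‖F x‖^2)) := by
      have h3 : Tendsto (fun k : ℕ => -(bk k) * x^2) atTop (𝓝 0) := by
        have := (h1.neg).mul_const (x^2)
        simpa using this
      have h4 := (Real.continuous_exp.tendsto 0).comp h3
      rw [Real.exp_zero] at h4
      have h5 := h4.mul_const (‖F x‖^2)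
      simpa using h5
    exact (ENNReal.continuous_ofReal.tendsto _).comp h2
  have hlim := lintegral_tendsto_of_tendsto_of_monotone hmeas hmono htd
  have heq : ∀ k : ℕ, ∫⁻ x, Jk k x
      = ENNReal.ofReal (∫ x : ℝ, rexp (-(4*π^2*((k:ℝ)+1))⁻¹ * x^2) * ‖F x‖^2) := fun k =>
    (ofReal_integral_eq_lintegral_ofReal (hJk_int k)
      (.of_forall fun x => by positivity)).symm
  have hseq : Tendsto (fun k : ℕ => ((k:ℝ)+1)) atTop atTop :=
    tendsto_atTop_add_const_right _ 1 tendsto_natCast_atTop_atTop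
  have h3 : Tendsto (fun k : ℕ => ∫⁻ x, Jk k x) atTop (𝓝 (ENNReal.ofReal (2*π*G))) := by
    simp only [heq]
    exact (ENNReal.continuous_ofReal.tendsto _).comp (hJtend.comp hseq)
  have hkey : (∫⁻ x, ENNReal.ofReal (‖F x‖^2) ∂(volume : Measure ℝ))
      = ENNReal.ofReal (2*π*G) := tendsto_nhds_unique hlim h3
  rw [show (∫ x : ℝ, ‖∫ t : ℝ, g t * cexp (-(I * x * t))‖^2) = ∫ x : ℝ, ‖F x‖^2 from rfl,
    integral_eq_lintegral_of_nonneg_ae (.of_forall fun x => by positivity)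
      hFsq_cont.aestronglyMeasurable,
    hkey, ENNReal.toReal_ofReal (by positivity)]

end


/-- The frame operator of the family of affine coherent states `ψ_x(r) = e^{−ixr} ψ(r)` on
`L²(ℝ₊, r^{n−1}dr)` acts as multiplication by `𝔰(r) = 2π r^{n−1} |ψ(r)|²`: if
`g(r) = conj(f(r)) ψ(r) r^{n−1}` (extended by `0`) is integrable and square-integrable, then
`∫_ℝ |⟨f, ψ_x⟩|² dx = ∫₀^∞ 𝔰(r) |f(r)|² r^{n−1} dr`. -/
theorem affine_coherent_states_frame_operator
    (n : ℕ) (hn : 1 ≤ n) (ψ f : ℝ → ℂ)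
    (hψL2 : MemLp ψ 2
      ((volume.restrict (Set.Ioi (0 : ℝ))).withDensity fun r => ENNReal.ofReal (r ^ (n - 1))))
    (hfL2 : MemLp f 2
      ((volume.restrict (Set.Ioi (0 : ℝ))).withDensity fun r => ENNReal.ofReal (r ^ (n - 1))))
    (hg_int : Integrable
      (fun r : ℝ => if 0 < r then (starRingEnd ℂ) (f r) * ψ r * (r : ℂ) ^ (n - 1) else 0)
      volume)
    (hg_sq : MemLp
      (fun r : ℝ => if 0 < r then (starRingEnd ℂ) (f r) * ψ r * (r : ℂ) ^ (n - 1) else 0)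
      2 volume) :
    ∫ x : ℝ, ‖∫ r in Set.Ioi (0 : ℝ),
        (starRingEnd ℂ) (f r) * Complex.exp (-(Complex.I * (x : ℂ) * (r : ℂ))) * ψ r
          * (r : ℂ) ^ (n - 1)‖ ^ 2
      = ∫ r in Set.Ioi (0 : ℝ),
          (2 * Real.pi * r ^ (n - 1) * ‖ψ r‖ ^ 2) * ‖f r‖ ^ 2 * r ^ (n - 1) := by
  classical
  set g0 : ℝ → ℂ :=
    fun r => if 0 < r then (starRingEnd ℂ) (f r) * ψ r * (r : ℂ) ^ (n - 1) else 0 with hg0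
  obtain ⟨g, hgsm, hgeq⟩ : ∃ g : ℝ → ℂ, StronglyMeasurable g ∧ g0 =ᵐ[volume] g :=
    ⟨hg_int.1.mk g0, hg_int.1.stronglyMeasurable_mk, hg_int.1.ae_eq_mk⟩
  have hgm : Measurable g := hgsm.measurable
  have hg1 : Integrable g volume := hg_int.congr hgeq
  have hg2 : MemLp g 2 volume := hg_sq.ae_eq hgeq
  have key := plancherel_L1_L2 hgm hg1 hg2
  have hLHS : ∀ x : ℝ, (∫ r in Set.Ioi (0:ℝ),
      (starRingEnd ℂ) (f r) * Complex.exp (-(Complex.I * (x:ℂ) * (r:ℂ))) * ψ r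
        * (r : ℂ) ^ (n - 1))
      = ∫ t : ℝ, g t * cexp (-(I * (x:ℂ) * (t:ℂ))) := by
    intro x
    calc (∫ r in Set.Ioi (0:ℝ),
        (starRingEnd ℂ) (f r) * Complex.exp (-(Complex.I * (x:ℂ) * (r:ℂ))) * ψ r
          * (r : ℂ) ^ (n - 1))
        = ∫ t : ℝ, g0 t * cexp (-(I * (x:ℂ) * (t:ℂ))) := by
          rw [← integral_indicator measurableSet_Ioi]
          refine integral_congr_ae (.of_forall fun t => ?_)
          rw [Set.indicator_apply, hg0]
          beta_reduce
          by_cases ht : t ∈ Set.Ioi (0:ℝ)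
          · rw [if_pos ht, if_pos (Set.mem_Ioi.mp ht)]; ring
          · rw [if_neg ht, if_neg (fun h => ht (Set.mem_Ioi.mpr h))]; simp
      _ = ∫ t : ℝ, g t * cexp (-(I * (x:ℂ) * (t:ℂ))) :=
          integral_congr_ae (hgeq.mono fun t h => by beta_reduce; rw [h])
  have hRHS : (∫ r in Set.Ioi (0:ℝ),
      (2 * Real.pi * r ^ (n - 1) * ‖ψ r‖ ^ 2) * ‖f r‖ ^ 2 * r ^ (n - 1))
      = 2 * π * ∫ t : ℝ, ‖g t‖^2 := by
    have h1 : (∫ t : ℝ, ‖g t‖^2) = ∫ t : ℝ, ‖g0 t‖^2 :=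
      (integral_congr_ae (μ := volume) (f := fun t => ‖g0 t‖^2) (g := fun t => ‖g t‖^2)
        (hgeq.mono fun t h => by beta_reduce; rw [h])).symm
    rw [h1, ← integral_const_mul]
    calc (∫ r in Set.Ioi (0:ℝ),
        (2 * Real.pi * r ^ (n - 1) * ‖ψ r‖ ^ 2) * ‖f r‖ ^ 2 * r ^ (n - 1))
        = ∫ r in Set.Ioi (0:ℝ), 2 * π * ‖g0 r‖^2 := by
          refine integral_congr_ae ((ae_restrict_iff' measurableSet_Ioi).mpr
            (.of_forall fun r hr => ?_))
          have hr0 : 0 < r := Set.mem_Ioi.mp hr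
          rw [hg0]
          beta_reduce
          rw [if_pos hr0, norm_mul, norm_mul, RCLike.norm_conj, norm_pow,
            Complex.norm_real, Real.norm_eq_abs, abs_of_pos hr0]
          ring
      _ = ∫ t : ℝ, 2 * π * ‖g0 t‖^2 := by
          rw [← integral_indicator measurableSet_Ioi]
          refine integral_congr_ae (.of_forall fun t => ?_)
          rw [Set.indicator_apply]
          by_cases ht : t ∈ Set.Ioi (0:ℝ)
          · rw [if_pos ht]
          · rw [if_neg ht, hg0]
            beta_reduce
            rw [if_neg (fun h => ht (Set.mem_Ioi.mpr h))]
            simp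
  calc (∫ x : ℝ, ‖∫ r in Set.Ioi (0:ℝ),
        (starRingEnd ℂ) (f r) * Complex.exp (-(Complex.I * (x:ℂ) * (r:ℂ))) * ψ r
          * (r : ℂ) ^ (n - 1)‖ ^ 2)
      = ∫ x : ℝ, ‖∫ t : ℝ, g t * cexp (-(I * (x:ℂ) * (t:ℂ)))‖^2 :=
        integral_congr_ae (.of_forall fun x => by beta_reduce; rw [hLHS x])
    _ = 2 * π * ∫ t : ℝ, ‖g t‖^2 := key
    _ = _ := hRHS.symm
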